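/- (Theorem 2, exact monotonicity of the EM-style iteration.) Let Y and Z be finite nonempty sets, let f : ℝ → ℝ be convex, and let p_E : Y → ℝ with p_E(y) > 0 for all y. Let (ρ_k)_{k∈ℕ} be a sequence of functions Z × Y → ℝ with ρ_k(z,y) > 0 for all (z,y), and define for each k the posterior kernel q^k(z|y) := ρ_k(z,y)/∑_{z'} ρ_k(z',y) and the loss L_k := D_f(ρ_k ‖ q^k⊗p_E) = ∑_{z,y} q^k(z|y)·p_E(y)·f( ρ_k(z,y)/(q^k(z|y)·p_E(y)) ). Suppose that each update does not increase the divergence against the current expert estimate, i.e. D_f(ρ_{k+1} ‖ q^k⊗p_E) ≤ D_f(ρ_k ‖ q^k⊗p_E) for every k. Then L_{k+1} ≤ L_k for every k; in particular the sequence of losses is nonincreasing. -/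
import Mathlib


open scoped BigOperators

/-- Jensen for one fiber: with strictly positive weights summing to 1. -/
lemma em_jensen_aux {Z : Type} [Fintype Z] {f : ℝ → ℝ} (hf : ConvexOn ℝ Set.univ f)
    (w x : Z → ℝ) (hw : ∀ z, 0 ≤ w z) (hw1 : ∑ z, w z = 1) :
    f (∑ z, w z * x z) ≤ ∑ z, w z * f (x z) := by
  have := hf.map_sum_le (t := Finset.univ) (w := w) (p := x)
    (fun i _ => hw i) hw1 (fun i _ => Set.mem_univ _)
  simpa using this

/-- **Theorem 2, exact monotonicity of the EM-style iteration.** Let `Y`,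
`Z` be finite nonempty sets, `f : ℝ → ℝ` convex, `p_E : Y → ℝ` strictly positive, and let
`(ρ_k)` be a sequence of strictly positive functions `Z × Y → ℝ`. Define for each `k` the
posterior kernel `q^k(z|y) := ρ_k(z,y)/∑_{z'} ρ_k(z',y)` and the loss
`L_k := D_f(ρ_k ‖ q^k⊗p_E)`. If each update does not increase the divergence against the
current expert estimate, i.e. `D_f(ρ_{k+1} ‖ q^k⊗p_E) ≤ D_f(ρ_k ‖ q^k⊗p_E)` for all `k`,
then `L_{k+1} ≤ L_k` for all `k`. -/
theorem em_iteration_monotone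
    {Y Z : Type} [Fintype Y] [Nonempty Y] [Fintype Z] [Nonempty Z]
    (f : ℝ → ℝ) (hf : ConvexOn ℝ Set.univ f)
    (pE : Y → ℝ) (hpE : ∀ y, 0 < pE y)
    (ρ : ℕ → Z × Y → ℝ) (hρ : ∀ k z y, 0 < ρ k (z, y))
    (hstep : ∀ k : ℕ,
      (∑ z : Z, ∑ y : Y,
        (ρ k (z, y) / ∑ z' : Z, ρ k (z', y)) * pE y *
          f (ρ (k + 1) (z, y) / ((ρ k (z, y) / ∑ z' : Z, ρ k (z', y)) * pE y)))
      ≤ (∑ z : Z, ∑ y : Y,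
        (ρ k (z, y) / ∑ z' : Z, ρ k (z', y)) * pE y *
          f (ρ k (z, y) / ((ρ k (z, y) / ∑ z' : Z, ρ k (z', y)) * pE y)))) :
    ∀ k : ℕ,
      (∑ z : Z, ∑ y : Y,
        (ρ (k + 1) (z, y) / ∑ z' : Z, ρ (k + 1) (z', y)) * pE y *
          f (ρ (k + 1) (z, y) / ((ρ (k + 1) (z, y) / ∑ z' : Z, ρ (k + 1) (z', y)) * pE y)))
      ≤ (∑ z : Z, ∑ y : Y,
        (ρ k (z, y) / ∑ z' : Z, ρ k (z', y)) * pE y *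
          f (ρ k (z, y) / ((ρ k (z, y) / ∑ z' : Z, ρ k (z', y)) * pE y))) := by
  intro k
  -- marginals
  have hS : ∀ (m : ℕ) (y : Y), 0 < ∑ z' : Z, ρ m (z', y) := fun m y =>
    Finset.sum_pos (fun z _ => hρ m z y) Finset.univ_nonempty
  -- Key lemma: for any m, the loss L_m (with its own posterior) equals
  -- ∑ y, pE y * f ((∑ z, ρ m (z,y)) / pE y)
  have hself : ∀ m : ℕ,
      (∑ z : Z, ∑ y : Y,
        (ρ m (z, y) / ∑ z' : Z, ρ m (z', y)) * pE y *
          f (ρ m (z, y) / ((ρ m (z, y) / ∑ z' : Z, ρ m (z', y)) * pE y)))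
      = ∑ y : Y, pE y * f ((∑ z' : Z, ρ m (z', y)) / pE y) := by
    intro m
    rw [Finset.sum_comm]
    refine Finset.sum_congr rfl fun y _ => ?_
    have hSy := hS m y
    have : ∀ z : Z,
        (ρ m (z, y) / ∑ z' : Z, ρ m (z', y)) * pE y *
          f (ρ m (z, y) / ((ρ m (z, y) / ∑ z' : Z, ρ m (z', y)) * pE y))
        = (ρ m (z, y) / ∑ z' : Z, ρ m (z', y)) *
            (pE y * f ((∑ z' : Z, ρ m (z', y)) / pE y)) := by
      intro z
      have hz := hρ m z y
      have hwz : ρ m (z, y) / ∑ z' : Z, ρ m (z', y) ≠ 0 := (div_pos hz hSy).ne'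
      have harg : ρ m (z, y) / ((ρ m (z, y) / ∑ z' : Z, ρ m (z', y)) * pE y)
          = (∑ z' : Z, ρ m (z', y)) / pE y := by
        calc ρ m (z, y) / ((ρ m (z, y) / ∑ z' : Z, ρ m (z', y)) * pE y)
            = ((ρ m (z, y) / ∑ z' : Z, ρ m (z', y)) * (∑ z' : Z, ρ m (z', y))) /
              ((ρ m (z, y) / ∑ z' : Z, ρ m (z', y)) * pE y) := by
              rw [div_mul_cancel₀ _ hSy.ne']
          _ = (∑ z' : Z, ρ m (z', y)) / pE y := mul_div_mul_left _ _ hwz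
      rw [harg]; ring
    rw [Finset.sum_congr rfl (fun z _ => this z), ← Finset.sum_mul,
      ← Finset.sum_div, div_self hSy.ne', one_mul]
  -- Jensen: ∑ y, pE y * f (S_{k+1} y / pE y) ≤ D_f(ρ_{k+1} ‖ q^k ⊗ pE)
  have hjensen :
      (∑ y : Y, pE y * f ((∑ z' : Z, ρ (k + 1) (z', y)) / pE y))
      ≤ (∑ z : Z, ∑ y : Y,
        (ρ k (z, y) / ∑ z' : Z, ρ k (z', y)) * pE y *
          f (ρ (k + 1) (z, y) / ((ρ k (z, y) / ∑ z' : Z, ρ k (z', y)) * pE y))) := by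
    rw [Finset.sum_comm]
    refine Finset.sum_le_sum fun y _ => ?_
    set w : Z → ℝ := fun z => ρ k (z, y) / ∑ z' : Z, ρ k (z', y) with hw
    set x : Z → ℝ := fun z => ρ (k + 1) (z, y) / (w z * pE y) with hx
    have hwpos : ∀ z, 0 < w z := fun z => div_pos (hρ k z y) (hS k y)
    have hw1 : ∑ z, w z = 1 := by
      rw [← Finset.sum_div, div_self (hS k y).ne']
    have hterm : ∀ z, w z * x z = ρ (k + 1) (z, y) / pE y := fun z => by
      show w z * (ρ (k + 1) (z, y) / (w z * pE y)) = _
      rw [mul_div_assoc', mul_div_mul_left _ _ (hwpos z).ne']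
    have hsum : ∑ z, w z * x z = (∑ z' : Z, ρ (k + 1) (z', y)) / pE y := by
      rw [Finset.sum_congr rfl fun z _ => hterm z, ← Finset.sum_div]
    calc pE y * f ((∑ z' : Z, ρ (k + 1) (z', y)) / pE y)
        = pE y * f (∑ z, w z * x z) := by rw [hsum]
      _ ≤ pE y * ∑ z, w z * f (x z) := by
          exact mul_le_mul_of_nonneg_left
            (em_jensen_aux hf w x (fun z => (hwpos z).le) hw1) (hpE y).le
      _ = ∑ z, w z * pE y * f (x z) := by
          rw [Finset.mul_sum]; exact Finset.sum_congr rfl fun z _ => by ring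
  calc _ = ∑ y : Y, pE y * f ((∑ z' : Z, ρ (k + 1) (z', y)) / pE y) := hself (k + 1)
    _ ≤ _ := le_trans hjensen (hstep k)
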